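/- Perpendicularity and invariance under inversion: let O, Q be points of the Euclidean plane, let R > 0 and s > 0, and assume the circle Γ with center Q and radius s is distinct from the circle Ω with center O and radius R, and that O ∉ Γ. Then the inversion with center O and radius R maps Γ onto itself (the image of Γ equals Γ) if and only if dist O Q ^ 2 = R ^ 2 + s ^ 2 (i.e., Γ and Ω intersect orthogonally). -/

import Mathlib

open EuclideanGeometry

lemma key_dist (O Q P : EuclideanSpace ℝ (Fin 2)) (R : ℝ) (hP : P ≠ O) :
    dist Q (inversion O R P) ^ 2 =
      dist O Q ^ 2 - R ^ 2 + (R ^ 2 / dist P O ^ 2) * (R ^ 2 - dist O Q ^ 2 + dist Q P ^ 2) := by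
  have h4 : dist P O = ‖P - O‖ := dist_eq_norm _ _
  have h3 : dist O Q = ‖Q - O‖ := by rw [dist_comm, dist_eq_norm]
  have htn : ‖P - O‖ ≠ 0 := by rw [← h4]; exact dist_ne_zero.2 hP
  have h1 : dist Q (inversion O R P) ^ 2 = ‖(Q - O) - (R / ‖P - O‖) ^ 2 • (P - O)‖ ^ 2 := by
    rw [inversion, dist_eq_norm, ← h4]
    congr 1
    simp only [vsub_eq_sub, vadd_eq_add]
    abel_nf
  have h2 : dist Q P ^ 2 = ‖Q - O‖ ^ 2 - 2 * inner ℝ (Q - O) (P - O) + ‖P - O‖ ^ 2 := by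
    have h : Q - P = (Q - O) - (P - O) := by abel_nf
    rw [dist_eq_norm, h, norm_sub_sq_real]
  rw [h1, h2, h3, h4, norm_sub_sq_real, inner_smul_right, norm_smul, Real.norm_eq_abs, abs_of_nonneg (by positivity : (0:ℝ) ≤ (R / ‖P - O‖) ^ 2)]
  set a := ‖Q - O‖
  set b := ‖P - O‖
  set i : ℝ := inner ℝ (Q - O) (P - O)
  field_simp
  ring

theorem inversion_invariant_iff_orthogonal (O Q : EuclideanSpace ℝ (Fin 2)) (R s : ℝ)
    (hR : 0 < R) (hs : 0 < s)
    (hne : ({P | dist Q P = s} : Set (EuclideanSpace ℝ (Fin 2))) ≠ {P | dist O P = R})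
    (hO : dist Q O ≠ s) :
    inversion O R '' {P | dist Q P = s} = {P | dist Q P = s} ↔
      dist O Q ^ 2 = R ^ 2 + s ^ 2 := by
  have hPO : ∀ P : EuclideanSpace ℝ (Fin 2), dist Q P = s → P ≠ O := by
    rintro P hP rfl; exact hO hP
  constructor
  · intro himg
    by_contra h
    -- every point of Γ lies on Ω
    have hsub : ∀ P : EuclideanSpace ℝ (Fin 2), dist Q P = s → dist P O = R := by
      intro P hP
      have hPne := hPO P hP
      have hmem : inversion O R P ∈ {P | dist Q P = s} := by
        rw [← himg]; exact Set.mem_image_of_mem _ hP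
      have hk := key_dist O Q P R hPne
      rw [hP] at hk
      have hd : dist Q (inversion O R P) = s := hmem
      rw [hd] at hk
      have htn : dist P O ≠ 0 := dist_ne_zero.2 hPne
      have hfac : (R ^ 2 - dist O Q ^ 2 + s ^ 2) * (R ^ 2 / dist P O ^ 2 - 1) = 0 := by
        field_simp at hk ⊢
        nlinarith [hk]
      rcases mul_eq_zero.1 hfac with h1 | h1
      · exact absurd (by linarith : dist O Q ^ 2 = R ^ 2 + s ^ 2) h
      · have : dist P O ^ 2 = R ^ 2 := by field_simp at h1; linarith
        have h2 : (dist P O - R) * (dist P O + R) = 0 := by nlinarith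
        rcases mul_eq_zero.1 h2 with h3 | h3
        · linarith
        · linarith [dist_nonneg (x := P) (y := O)]
    -- now use unit vectors
    set w := Q - O with hw
    have key2 : ∀ u : EuclideanSpace ℝ (Fin 2), ‖u‖ = 1 →
        ‖w + s • u‖ ^ 2 = R ^ 2 ∧ ‖w - s • u‖ ^ 2 = R ^ 2 := by
      intro u hu
      constructor
      · have := hsub (Q + s • u) (by
          rw [dist_eq_norm]; simp [norm_smul, abs_of_pos hs, hu])
        rw [dist_eq_norm] at this
        have he : Q + s • u - O = w + s • u := by rw [hw]; abel
        rw [he] at this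
        rw [this]
      · have := hsub (Q - s • u) (by
          rw [dist_eq_norm]
          have he : Q - (Q - s • u) = s • u := by abel
          rw [he]; simp [norm_smul, abs_of_pos hs, hu])
        rw [dist_eq_norm] at this
        have he : Q - s • u - O = w - s • u := by rw [hw]; abel
        rw [he] at this
        rw [this]
    have hinner : ∀ u : EuclideanSpace ℝ (Fin 2), ‖u‖ = 1 → inner ℝ w u = (0 : ℝ) := by
      intro u hu
      obtain ⟨h1, h2⟩ := key2 u hu
      rw [norm_add_sq_real] at h1
      rw [norm_sub_sq_real] at h2
      rw [inner_smul_right] at h1 h2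
      nlinarith [h1, h2]
    have hw0 : w = 0 := by
      by_contra hw0
      have hnw : ‖w‖ ≠ 0 := norm_ne_zero_iff.2 hw0
      have := hinner (‖w‖⁻¹ • w) (norm_smul_inv_norm hw0)
      rw [inner_smul_right, real_inner_self_eq_norm_sq,
        show ‖w‖⁻¹ * ‖w‖ ^ 2 = ‖w‖ by field_simp] at this
      exact hnw this
    have hQO : Q = O := by rwa [hw, sub_eq_zero] at hw0
    -- get s = R
    have hu1 : ‖(EuclideanSpace.single 0 1 : EuclideanSpace ℝ (Fin 2))‖ = 1 := by
      simp [EuclideanSpace.norm_single]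
    obtain ⟨h1, _⟩ := key2 _ hu1
    rw [hw0, zero_add, norm_smul, hu1] at h1
    have hsR : s = R := by
      have : s ^ 2 = R ^ 2 := by
        rw [Real.norm_eq_abs, abs_of_pos hs] at h1; simpa using h1
      nlinarith
    apply hne
    ext P
    simp [hQO, hsR, dist_comm]
  · intro horth
    apply Set.Subset.antisymm
    · rintro _ ⟨P, hP, rfl⟩
      have hk := key_dist O Q P R (hPO P hP)
      rw [hP, horth] at hk
      have : dist Q (inversion O R P) ^ 2 = s ^ 2 := by
        rw [hk]; ring
      have h2 : (dist Q (inversion O R P) - s) * (dist Q (inversion O R P) + s) = 0 := by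
        nlinarith
      rcases mul_eq_zero.1 h2 with h3 | h3
      · show dist Q (inversion O R P) = s; linarith
      · have := dist_nonneg (x := Q) (y := inversion O R P); linarith
    · intro P hP
      refine ⟨inversion O R P, ?_, inversion_inversion O hR.ne' P⟩
      have hk := key_dist O Q P R (hPO P hP)
      rw [Set.mem_setOf_eq] at hP
      rw [hP, horth] at hk
      have : dist Q (inversion O R P) ^ 2 = s ^ 2 := by rw [hk]; ring
      have h2 : (dist Q (inversion O R P) - s) * (dist Q (inversion O R P) + s) = 0 := by
        nlinarith
      rcases mul_eq_zero.1 h2 with h3 | h3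
      · show dist Q (inversion O R P) = s; linarith
      · have := dist_nonneg (x := Q) (y := inversion O R P); linarith
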